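/- Let n ≥ 1 be an integer, q > n, s ∈ (0,1), and let f(x) = (1+|x|²)^{−q/2}. Then there exists a constant C > 0 such that for every x ∈ ℝⁿ the integral I_s f(x) converges absolutely and |I_s f(x)| ≤ C (1+|x|²)^{−(n+2s)/2}. -/

import Mathlib

open MeasureTheory Metric Set Real Filter

variable {n : ℕ}

local notation "E" => EuclideanSpace ℝ (Fin n)


private lemma meas_rpow_norm {a : ℝ} : Measurable (fun y : E => ‖y‖ ^ a) := by fun_prop

private lemma int_ball_one (hn : 1 ≤ n) {a : ℝ} (ha : -(n:ℝ) < a) :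
    IntegrableOn (fun y : E => ‖y‖ ^ a) (ball 0 1) := by
  have hmeas : AEStronglyMeasurable (fun y : E => ‖y‖ ^ a)
      (volume.restrict (ball (0:E) 1)) := meas_rpow_norm.aestronglyMeasurable
  rcases le_or_gt 0 a with h0 | h0
  · refine Integrable.mono' (g := fun _ => (1:ℝ))
      (integrableOn_const measure_ball_lt_top.ne) hmeas ?_
    rw [ae_restrict_iff' measurableSet_ball]
    filter_upwards with y hy
    rw [Real.norm_eq_abs, abs_of_nonneg (rpow_nonneg (norm_nonneg _) _)]
    exact Real.rpow_le_one (norm_nonneg _) (le_of_lt (mem_ball_zero_iff.1 hy)) h0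
  · have ha0 : a ≠ 0 := ne_of_lt h0
    constructor
    · exact hmeas
    · have hnn : 0 ≤ᵐ[volume.restrict (ball (0:E) 1)] fun y : E => ‖y‖ ^ a :=
        Filter.Eventually.of_forall fun y => rpow_nonneg (norm_nonneg _) _
      rw [hasFiniteIntegral_iff_ofReal hnn]
      rw [lintegral_eq_lintegral_meas_le _ hnn meas_rpow_norm.aemeasurable]
      set μ := volume.restrict (ball (0:E) 1)
      have hsub : ∀ t : ℝ, 0 < t →
          {y : E | t ≤ ‖y‖ ^ a} ⊆ closedBall 0 (t ^ a⁻¹) := by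
        intro t ht y hy
        simp only [mem_setOf_eq] at hy
        have h1 : (‖y‖ ^ a) ^ a⁻¹ ≤ t ^ a⁻¹ :=
          Real.rpow_le_rpow_of_nonpos ht hy (inv_nonpos.2 h0.le)
        rw [← Real.rpow_mul (norm_nonneg _), mul_inv_cancel₀ ha0, Real.rpow_one] at h1
        exact mem_closedBall_zero_iff.2 h1
      have hbound : ∀ t ∈ Ioi (0:ℝ), μ {y : E | t ≤ ‖y‖ ^ a} ≤
          min (volume (ball (0:E) 1))
            (ENNReal.ofReal (t ^ (a⁻¹ * n)) * volume (ball (0:E) 1)) := by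
        intro t ht
        rw [mem_Ioi] at ht
        refine le_min (le_trans (measure_mono (subset_univ _)) ?_) ?_
        · rw [Measure.restrict_apply_univ]
        · refine le_trans (le_trans (Measure.restrict_le_self _)
            (measure_mono (hsub t ht))) ?_
          rw [Measure.addHaar_closedBall _ _ (Real.rpow_nonneg ht.le _)]
          rw [finrank_euclideanSpace_fin]
          rw [← Real.rpow_natCast (t ^ a⁻¹) n, ← Real.rpow_mul ht.le]
      calc ∫⁻ t in Ioi (0:ℝ), μ {y : E | t ≤ ‖y‖ ^ a}
          ≤ ∫⁻ t in Ioi (0:ℝ), min (volume (ball (0:E) 1))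
            (ENNReal.ofReal (t ^ (a⁻¹ * n)) * volume (ball (0:E) 1)) :=
            setLIntegral_mono' measurableSet_Ioi hbound
        _ ≤ (∫⁻ t in Ioc (0:ℝ) 1, min (volume (ball (0:E) 1))
            (ENNReal.ofReal (t ^ (a⁻¹ * n)) * volume (ball (0:E) 1)))
            + ∫⁻ t in Ioi (1:ℝ), min (volume (ball (0:E) 1))
            (ENNReal.ofReal (t ^ (a⁻¹ * n)) * volume (ball (0:E) 1)) :=
            (lintegral_mono_set Ioi_subset_Ioc_union_Ioi).trans (lintegral_union_le _ _ _)
        _ < ⊤ := by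
            refine ENNReal.add_lt_top.2 ⟨?_, ?_⟩
            · refine lt_of_le_of_lt (setLIntegral_mono' measurableSet_Ioc
                (fun t _ => min_le_left _ _)) ?_
              rw [setLIntegral_const]
              exact ENNReal.mul_lt_top measure_ball_lt_top (by simp [Real.volume_Ioc])
            · refine lt_of_le_of_lt (setLIntegral_mono' measurableSet_Ioi
                (fun t _ => min_le_right _ _)) ?_
              rw [lintegral_mul_const' _ _ measure_ball_lt_top.ne]
              refine ENNReal.mul_lt_top ?_ measure_ball_lt_top
              have hint : IntegrableOn (fun t : ℝ => t ^ (a⁻¹ * n)) (Ioi (1:ℝ)) := by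
                refine integrableOn_Ioi_rpow_of_lt ?_ one_pos
                have h1 : a⁻¹ * n = (n:ℝ) / a := by ring
                rw [h1, div_lt_iff_of_neg h0]
                linarith
              exact hint.setLIntegral_lt_top

private lemma int_compl_one (hn : 1 ≤ n) {b : ℝ} (hb : b < -(n:ℝ)) :
    IntegrableOn (fun y : E => ‖y‖ ^ b) (ball 0 1)ᶜ := by
  have hb0 : b < 0 := by have : (1:ℝ) ≤ n := Nat.one_le_cast.2 hn; linarith
  have hint : Integrable (fun y : E => (2:ℝ) ^ (-b) * (1 + ‖y‖) ^ (-(-b))) := by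
    refine Integrable.const_mul ?_ _
    refine integrable_one_add_norm ?_
    rw [finrank_euclideanSpace_fin]
    linarith
  refine Integrable.mono' hint.integrableOn meas_rpow_norm.aestronglyMeasurable ?_
  rw [ae_restrict_iff' measurableSet_ball.compl]
  filter_upwards with y hy
  rw [mem_compl_iff, mem_ball_zero_iff, not_lt] at hy
  rw [Real.norm_eq_abs, abs_of_nonneg (rpow_nonneg (norm_nonneg _) _), neg_neg]
  have h1 : (1 + ‖y‖) / 2 ≤ ‖y‖ := by
    have := norm_nonneg y; linarith
  have h2 : ‖y‖ ^ b ≤ ((1 + ‖y‖) / 2) ^ b :=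
    Real.rpow_le_rpow_of_nonpos (by positivity) h1 hb0.le
  calc ‖y‖ ^ b ≤ ((1 + ‖y‖) / 2) ^ b := h2
    _ = (2:ℝ) ^ (-b) * (1 + ‖y‖) ^ b := by
        rw [Real.div_rpow (by positivity) (by norm_num), Real.rpow_neg (by norm_num)]
        rw [div_eq_mul_inv, mul_comm]
    _ = _ := rfl

private lemma scale_ball (R a : ℝ) (hR : 0 < R) (y : E) :
    (ball (0:E) R).indicator (fun z => ‖z‖ ^ a) y
      = R ^ a * (ball (0:E) 1).indicator (fun z => ‖z‖ ^ a) (R⁻¹ • y) := by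
  have hmem : R⁻¹ • y ∈ ball (0:E) 1 ↔ y ∈ ball (0:E) R := by
    rw [mem_ball_zero_iff, mem_ball_zero_iff, norm_smul, Real.norm_eq_abs,
      abs_of_pos (inv_pos.2 hR)]
    rw [inv_mul_lt_iff₀ hR, mul_one]
  by_cases h : y ∈ ball (0:E) R
  · rw [indicator_of_mem h, indicator_of_mem (hmem.2 h)]
    rw [norm_smul, Real.norm_eq_abs, abs_of_pos (inv_pos.2 hR)]
    rw [Real.mul_rpow (inv_nonneg.2 hR.le) (norm_nonneg _),
      Real.inv_rpow hR.le, ← mul_assoc, mul_inv_cancel₀ (by positivity), one_mul]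
  · rw [indicator_of_notMem h, indicator_of_notMem (fun hc => h (hmem.1 hc)), mul_zero]

private lemma scale_compl (R a : ℝ) (hR : 0 < R) (y : E) :
    ((ball (0:E) R)ᶜ).indicator (fun z => ‖z‖ ^ a) y
      = R ^ a * ((ball (0:E) 1)ᶜ).indicator (fun z => ‖z‖ ^ a) (R⁻¹ • y) := by
  have hmem : R⁻¹ • y ∈ (ball (0:E) 1)ᶜ ↔ y ∈ (ball (0:E) R)ᶜ := by
    rw [mem_compl_iff, mem_compl_iff, not_iff_not]
    rw [mem_ball_zero_iff, mem_ball_zero_iff, norm_smul, Real.norm_eq_abs,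
      abs_of_pos (inv_pos.2 hR)]
    rw [inv_mul_lt_iff₀ hR, mul_one]
  by_cases h : y ∈ (ball (0:E) R)ᶜ
  · rw [indicator_of_mem h, indicator_of_mem (hmem.2 h)]
    rw [norm_smul, Real.norm_eq_abs, abs_of_pos (inv_pos.2 hR)]
    rw [Real.mul_rpow (inv_nonneg.2 hR.le) (norm_nonneg _),
      Real.inv_rpow hR.le, ← mul_assoc, mul_inv_cancel₀ (by positivity), one_mul]
  · rw [indicator_of_notMem h, indicator_of_notMem (fun hc => h (hmem.1 hc)), mul_zero]

private lemma int_ball_R (hn : 1 ≤ n) {R a : ℝ} (hR : 0 < R) (ha : -(n:ℝ) < a) :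
    IntegrableOn (fun y : E => ‖y‖ ^ a) (ball 0 R) ∧
    ∫ y in ball (0:E) R, ‖y‖ ^ a = R ^ ((n:ℝ) + a) * ∫ y in ball (0:E) 1, ‖y‖ ^ a := by
  have h1 : Integrable ((ball (0:E) 1).indicator (fun z => ‖z‖ ^ a)) :=
    (integrable_indicator_iff measurableSet_ball).2 (int_ball_one hn ha)
  have h2 : Integrable (fun y : E => (ball (0:E) 1).indicator (fun z => ‖z‖ ^ a) (R⁻¹ • y)) :=
    (integrable_comp_smul_iff volume _ (inv_ne_zero hR.ne')).2 h1
  have heq : (ball (0:E) R).indicator (fun z => ‖z‖ ^ a)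
      = fun y : E => R ^ a * (ball (0:E) 1).indicator (fun z => ‖z‖ ^ a) (R⁻¹ • y) :=
    funext fun y => scale_ball R a hR y
  constructor
  · rw [← integrable_indicator_iff measurableSet_ball, heq]
    exact h2.const_mul _
  · rw [← integral_indicator measurableSet_ball, heq,
      integral_const_mul, Measure.integral_comp_inv_smul volume _ R,
      ← integral_indicator measurableSet_ball, finrank_euclideanSpace_fin,
      abs_of_pos (pow_pos hR n), smul_eq_mul, ← mul_assoc,
      ← Real.rpow_natCast R n, ← Real.rpow_add hR]
    ring_nf

private lemma int_compl_R (hn : 1 ≤ n) {R b : ℝ} (hR : 0 < R) (hb : b < -(n:ℝ)) :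
    IntegrableOn (fun y : E => ‖y‖ ^ b) (ball 0 R)ᶜ ∧
    ∫ y in (ball (0:E) R)ᶜ, ‖y‖ ^ b = R ^ ((n:ℝ) + b) * ∫ y in (ball (0:E) 1)ᶜ, ‖y‖ ^ b := by
  have h1 : Integrable (((ball (0:E) 1)ᶜ).indicator (fun z => ‖z‖ ^ b)) :=
    (integrable_indicator_iff measurableSet_ball.compl).2 (int_compl_one hn hb)
  have h2 : Integrable (fun y : E => ((ball (0:E) 1)ᶜ).indicator (fun z => ‖z‖ ^ b) (R⁻¹ • y)) :=
    (integrable_comp_smul_iff volume _ (inv_ne_zero hR.ne')).2 h1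
  have heq : ((ball (0:E) R)ᶜ).indicator (fun z => ‖z‖ ^ b)
      = fun y : E => R ^ b * ((ball (0:E) 1)ᶜ).indicator (fun z => ‖z‖ ^ b) (R⁻¹ • y) :=
    funext fun y => scale_compl R b hR y
  constructor
  · rw [← integrable_indicator_iff measurableSet_ball.compl, heq]
    exact h2.const_mul _
  · rw [← integral_indicator measurableSet_ball.compl, heq,
      integral_const_mul, Measure.integral_comp_inv_smul volume _ R,
      ← integral_indicator measurableSet_ball.compl, finrank_euclideanSpace_fin,
      abs_of_pos (pow_pos hR n), smul_eq_mul, ← mul_assoc,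
      ← Real.rpow_natCast R n, ← Real.rpow_add hR]
    ring_nf


set_option maxHeartbeats 1000000 in
private lemma secondDiff_bound {q : ℝ} (hq : 0 < q) (x y : E) {A : ℝ} (hA : 0 < A)
    (h : ∀ t : ℝ, |t| ≤ 1 → A ≤ 1 + ‖x + t • y‖ ^ 2) :
    |(1 + ‖x + y‖ ^ 2) ^ (-q / 2) - 2 * (1 + ‖x‖ ^ 2) ^ (-q / 2)
        + (1 + ‖x - y‖ ^ 2) ^ (-q / 2)|
      ≤ 2 * (q ^ 2 + 3 * q) * ‖y‖ ^ 2 * A ^ (-q / 2 - 1) := by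
  have hA' : (0:ℝ) ≤ A ^ (-q/2-1) := rpow_nonneg hA.le _
  set ip : ℝ := inner ℝ x y with hip_def
  set ny : ℝ := ‖y‖ with hny_def
  set p : ℝ → ℝ := fun t => 1 + ‖x‖^2 + 2*ip*t + ny^2*t^2 with hp_def
  have hp_eq : ∀ t : ℝ, p t = 1 + ‖x + t • y‖ ^ 2 := by
    intro t
    have h1 : ‖x + t • y‖ ^ 2 = ‖x‖^2 + 2 * inner ℝ x (t • y) + ‖t • y‖^2 :=
      norm_add_sq_real x (t • y)
    rw [hp_def]
    simp only [h1, real_inner_smul_right, norm_smul, Real.norm_eq_abs, mul_pow, sq_abs]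
    ring
  have hp_pos : ∀ t, 0 < p t := fun t => by
    rw [hp_eq]; positivity
  set p' : ℝ → ℝ := fun t => 2*ip + 2*ny^2*t with hp'_def
  have hpd : ∀ t, HasDerivAt p (p' t) t := by
    intro t
    have heq : p = fun u => (1 + ‖x‖^2) + (2*ip*u + ny^2*u^2) := by
      funext u; rw [hp_def]; ring
    have h2 : HasDerivAt (fun u : ℝ => 2*ip*u + ny^2*u^2)
        (2*ip*1 + ny^2*(↑2*t^1)) t :=
      ((hasDerivAt_id t).const_mul (2*ip)).add ((hasDerivAt_pow 2 t).const_mul (ny^2))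
    have h3 := h2.const_add (1 + ‖x‖^2)
    rw [heq, hp'_def]
    refine h3.congr_deriv ?_
    push_cast; ring
  -- first derivative of φ
  have hφd : ∀ t, HasDerivAt (fun u => p u ^ (-q/2)) (p' t * (-q/2) * p t ^ (-q/2-1)) t :=
    fun t => (hpd t).rpow_const (Or.inl (hp_pos t).ne')
  set ψ : ℝ → ℝ := fun t => p' t * (-q/2) * p t ^ (-q/2-1) with hψ_def
  set σ : ℝ → ℝ := fun t =>
    (2*ny^2) * (-q/2) * p t ^ (-q/2-1)
      + (p' t * (-q/2)) * (p' t * (-q/2-1) * p t ^ (-q/2-1-1)) with hσ_def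
  have hψd : ∀ t, HasDerivAt ψ (σ t) t := by
    intro t
    have ha : HasDerivAt (fun u => p' u * (-q/2)) ((2*ny^2) * (-q/2)) t := by
      have h1 : HasDerivAt p' (2*ny^2) t := by
        have heq : p' = fun u => 2*ip + (2*ny^2)*u := by funext u; rw [hp'_def]
        rw [heq]
        simpa using ((hasDerivAt_id t).const_mul (2*ny^2)).const_add (2*ip)
      exact h1.mul_const _
    have hb : HasDerivAt (fun u => p u ^ (-q/2-1)) (p' t * (-q/2-1) * p t ^ (-q/2-1-1)) t :=
      (hpd t).rpow_const (Or.inl (hp_pos t).ne')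
    have := ha.mul hb
    exact this
  -- bound on σ on [-1,1]
  have hσ_bound : ∀ t : ℝ, |t| ≤ 1 → |σ t| ≤ (q^2+3*q) * ny^2 * A^(-q/2-1) := by
    intro t ht
    have hAp : A ≤ p t := by rw [hp_eq]; exact h t ht
    have hP : (0:ℝ) ≤ p t ^ (-q/2-1) := rpow_nonneg (hp_pos t).le _
    have hQ : (0:ℝ) ≤ p t ^ (-q/2-1-1) := rpow_nonneg (hp_pos t).le _
    have hPQ : p t * p t ^ (-q/2-1-1) = p t ^ (-q/2-1) := by
      nth_rewrite 1 [← Real.rpow_one (p t)]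
      rw [← Real.rpow_add (hp_pos t)]
      ring_nf
    have hPA : p t ^ (-q/2-1) ≤ A ^ (-q/2-1) :=
      Real.rpow_le_rpow_of_nonpos hA hAp (by linarith)
    have hp'sq : (p' t)^2 ≤ 4 * p t * ny^2 := by
      have hinner : ip + ny^2*t = inner ℝ (x + t • y) y := by
        rw [inner_add_left, real_inner_smul_left, real_inner_self_eq_norm_sq, hip_def, hny_def]
        ring
      have hcs : |(inner ℝ (x + t • y) y : ℝ)| ≤ ‖x + t • y‖ * ny := abs_real_inner_le_norm _ _
      have hcs2 : (inner ℝ (x + t • y) y : ℝ)^2 ≤ (‖x + t • y‖ * ny)^2 := by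
        rw [← sq_abs]
        apply pow_le_pow_left₀ (abs_nonneg _) hcs
      have hxy2 : ‖x + t • y‖^2 ≤ p t := by
        rw [hp_eq]; nlinarith [sq_nonneg ‖x + t • y‖]
      have hp'eq : p' t = 2 * (inner ℝ (x + t • y) y : ℝ) := by
        rw [hp'_def, ← hinner]; ring
      rw [hp'eq]
      nlinarith [sq_nonneg ny, norm_nonneg (x + t • y), sq_nonneg (‖x + t • y‖ - ny)]
    have hσ_eq : σ t = -q * ny^2 * p t ^ (-q/2-1)
        + (q/2)*(q/2+1)*(p' t)^2 * p t ^ (-q/2-1-1) := by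
      rw [hσ_def]; ring
    rw [hσ_eq, abs_le]
    constructor
    · have h1 : (0:ℝ) ≤ (q/2)*(q/2+1)*(p' t)^2 * p t ^ (-q/2-1-1) := by positivity
      have h2 : q * ny^2 * p t ^ (-q/2-1) ≤ q * ny^2 * A ^ (-q/2-1) := by
        apply mul_le_mul_of_nonneg_left hPA; positivity
      nlinarith [h1, h2, mul_nonneg (mul_nonneg (by nlinarith : (0:ℝ) ≤ q^2+2*q) (sq_nonneg ny)) hA']
    · have h1 : (q/2)*(q/2+1)*(p' t)^2 * p t ^ (-q/2-1-1)
          ≤ (q/2)*(q/2+1)*(4 * p t * ny^2) * p t ^ (-q/2-1-1) := by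
        apply mul_le_mul_of_nonneg_right _ hQ
        apply mul_le_mul_of_nonneg_left hp'sq
        positivity
      have h2 : (q/2)*(q/2+1)*(4 * p t * ny^2) * p t ^ (-q/2-1-1)
          = (q^2 + 2*q) * ny^2 * (p t * p t ^ (-q/2-1-1)) := by ring
      rw [h2, hPQ] at h1
      have h3 : (q^2+2*q) * ny^2 * p t ^ (-q/2-1) ≤ (q^2+2*q) * ny^2 * A ^ (-q/2-1) := by
        apply mul_le_mul_of_nonneg_left hPA; positivity
      have h4 : (0:ℝ) ≤ q * ny^2 * p t ^ (-q/2-1) := by positivity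
      nlinarith [h1, h3, h4, mul_nonneg (mul_nonneg hq.le (sq_nonneg ny)) hA']
  -- MVT for ψ on [-1,1]
  have hMVT1 : ∀ t ∈ Icc (0:ℝ) 1, |ψ t - ψ (-t)|
      ≤ (q^2+3*q) * ny^2 * A^(-q/2-1) * (2*t) := by
    intro t ht
    have := Convex.norm_image_sub_le_of_norm_hasDerivWithin_le
      (f := ψ) (f' := σ) (s := Icc (-1:ℝ) 1) (C := (q^2+3*q) * ny^2 * A^(-q/2-1))
      (fun u hu => (hψd u).hasDerivWithinAt)
      (fun u hu => by
        rw [Real.norm_eq_abs]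
        exact hσ_bound u (abs_le.2 ⟨hu.1, hu.2⟩))
      (convex_Icc _ _)
      (show -t ∈ Icc (-1:ℝ) 1 by constructor <;> [linarith [ht.2]; linarith [ht.1]])
      (show t ∈ Icc (-1:ℝ) 1 by constructor <;> [linarith [ht.1]; linarith [ht.2]])
    rw [Real.norm_eq_abs, Real.norm_eq_abs] at this
    calc |ψ t - ψ (-t)| ≤ (q^2+3*q) * ny^2 * A^(-q/2-1) * |t - -t| := this
      _ = (q^2+3*q) * ny^2 * A^(-q/2-1) * (2*t) := by
          rw [sub_neg_eq_add, abs_of_nonneg (by linarith [ht.1] : (0:ℝ) ≤ t + t)]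
          ring
  -- MVT for g on [0,1]
  set g : ℝ → ℝ := fun t => p t ^ (-q/2) + p (-t) ^ (-q/2) with hg_def
  have hgd : ∀ t, HasDerivAt g (ψ t - ψ (-t)) t := by
    intro t
    have h1 : HasDerivAt (fun u : ℝ => p (-u) ^ (-q/2)) (ψ (-t) * (-1)) t := by
      exact HasDerivAt.comp t (hφd (-t)) (hasDerivAt_neg t)
    have h2 := (hφd t).add h1
    rw [hg_def]
    refine h2.congr_deriv ?_
    rw [hψ_def]; ring
  have hMVT2 : |g 1 - g 0| ≤ 2 * ((q^2+3*q) * ny^2 * A^(-q/2-1)) := by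
    have := Convex.norm_image_sub_le_of_norm_hasDerivWithin_le
      (f := g) (f' := fun t => ψ t - ψ (-t)) (s := Icc (0:ℝ) 1)
      (C := (q^2+3*q) * ny^2 * A^(-q/2-1) * 2)
      (fun u hu => (hgd u).hasDerivWithinAt)
      (fun u hu => by
        rw [Real.norm_eq_abs]
        calc |ψ u - ψ (-u)| ≤ (q^2+3*q) * ny^2 * A^(-q/2-1) * (2*u) := hMVT1 u hu
          _ ≤ (q^2+3*q) * ny^2 * A^(-q/2-1) * 2 := by
              apply mul_le_mul_of_nonneg_left _ (by positivity)
              linarith [hu.2])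
      (convex_Icc _ _) (left_mem_Icc.2 zero_le_one) (right_mem_Icc.2 zero_le_one)
    rw [Real.norm_eq_abs, Real.norm_eq_abs] at this
    calc |g 1 - g 0| ≤ (q^2+3*q) * ny^2 * A^(-q/2-1) * 2 * |1 - 0| := this
      _ = 2 * ((q^2+3*q) * ny^2 * A^(-q/2-1)) := by norm_num; ring
  -- conclude
  have hg1 : g 1 = (1 + ‖x + y‖ ^ 2) ^ (-q/2) + (1 + ‖x - y‖ ^ 2) ^ (-q/2) := by
    show p 1 ^ (-q/2) + p (-(1:ℝ)) ^ (-q/2) = _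
    have e1 : p 1 = 1 + ‖x + y‖ ^ 2 := by rw [hp_eq]; rw [one_smul]
    have e2 : p (-1) = 1 + ‖x - y‖ ^ 2 := by
      rw [hp_eq]; rw [neg_smul, one_smul, ← sub_eq_add_neg]
    rw [e1, e2]
  have hg0 : g 0 = 2 * (1 + ‖x‖ ^ 2) ^ (-q/2) := by
    show p 0 ^ (-q/2) + p (-(0:ℝ)) ^ (-q/2) = _
    have e0 : p (-0) = 1 + ‖x‖ ^ 2 := by rw [hp_eq]; rw [neg_zero, zero_smul, add_zero]
    have e0' : p 0 = 1 + ‖x‖ ^ 2 := by rw [hp_eq]; rw [zero_smul, add_zero]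
    rw [e0, e0']; ring
  have hfinal : (1 + ‖x + y‖ ^ 2) ^ (-q / 2) - 2 * (1 + ‖x‖ ^ 2) ^ (-q / 2)
      + (1 + ‖x - y‖ ^ 2) ^ (-q / 2) = g 1 - g 0 := by
    rw [hg1, hg0]; ring
  rw [hfinal]
  calc |g 1 - g 0| ≤ 2 * ((q^2+3*q) * ny^2 * A^(-q/2-1)) := hMVT2
    _ = 2 * (q ^ 2 + 3 * q) * ‖y‖ ^ 2 * A ^ (-q / 2 - 1) := by rw [hny_def]; ring


private lemma bracket_lower (x v : E) (hv : ‖v‖ ≤ Real.sqrt (1 + ‖x‖^2)) :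
    (Real.sqrt (1 + ‖x‖^2) - ‖v‖)^2 ≤ 1 + ‖x + v‖^2 := by
  set m : ℝ := Real.sqrt (1 + ‖x‖^2) with hm_def
  have hm2 : m^2 = 1 + ‖x‖^2 := Real.sq_sqrt (by positivity)
  have hm_le : m ≤ 1 + ‖x‖ := sqrt_one_add_norm_sq_le x
  have hm0 : 0 ≤ m := Real.sqrt_nonneg _
  have hmx : ‖x‖ ≤ m := by nlinarith [norm_nonneg x]
  have h1 : ‖x‖ ≤ ‖x + v‖ + ‖v‖ := by
    calc ‖x‖ = ‖(x + v) + (-v)‖ := by rw [add_neg_cancel_right]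
      _ ≤ ‖x + v‖ + ‖-v‖ := norm_add_le _ _
      _ = ‖x + v‖ + ‖v‖ := by rw [norm_neg]
  rcases le_or_gt ‖v‖ ‖x‖ with hc | hc
  · have h1' : ‖x‖ - ‖v‖ ≤ ‖x + v‖ := by linarith
    have h2 : (‖x‖ - ‖v‖)^2 ≤ ‖x + v‖^2 :=
      pow_le_pow_left₀ (by linarith) h1' 2
    nlinarith [mul_le_mul_of_nonneg_right hmx (norm_nonneg v)]
  · have e1 : m - ‖v‖ ≤ 1 := by linarith
    have e2 : 0 ≤ m - ‖v‖ := by linarith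
    nlinarith [sq_nonneg ‖x + v‖, mul_nonneg e2 (sub_nonneg.2 e1)]

set_option maxHeartbeats 2000000

/-- for `f = ⟨·⟩^{-q}` with `q > n` and `s ∈ (0,1)`, the singular integral
`I_s f(x)` converges absolutely and satisfies `|I_s f(x)| ≤ C ⟨x⟩^{-n-2s}`. -/
theorem stmt4 (n : ℕ) (hn : 1 ≤ n) (q : ℝ) (hq : (n : ℝ) < q)
    (s : ℝ) (hs0 : 0 < s) (hs1 : s < 1) :
    ∃ C > (0 : ℝ), ∀ x : EuclideanSpace ℝ (Fin n),
      Integrable (fun y : EuclideanSpace ℝ (Fin n) =>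
        ((1 + ‖x + y‖ ^ 2) ^ (-q / 2) - 2 * (1 + ‖x‖ ^ 2) ^ (-q / 2)
            + (1 + ‖x - y‖ ^ 2) ^ (-q / 2)) / ‖y‖ ^ ((n : ℝ) + 2 * s)) ∧
      |∫ y : EuclideanSpace ℝ (Fin n),
          ((1 + ‖x + y‖ ^ 2) ^ (-q / 2) - 2 * (1 + ‖x‖ ^ 2) ^ (-q / 2)
              + (1 + ‖x - y‖ ^ 2) ^ (-q / 2)) / ‖y‖ ^ ((n : ℝ) + 2 * s)| ≤
        C * (1 + ‖x‖ ^ 2) ^ (-((n : ℝ) + 2 * s) / 2) := by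
  classical
  have hq0 : 0 < q := lt_of_le_of_lt (Nat.cast_nonneg n) hq
  have hn1 : (1:ℝ) ≤ n := Nat.one_le_cast.2 hn
  set a : ℝ := 2 - ((n:ℝ) + 2*s) with ha_def
  set b : ℝ := -((n:ℝ) + 2*s) with hb_def
  have ha : -(n:ℝ) < a := by rw [ha_def]; linarith
  have hb : b < -(n:ℝ) := by rw [hb_def]; linarith
  have hns_pos : (0:ℝ) < (n:ℝ) + 2*s := by linarith
  set Fq : EuclideanSpace ℝ (Fin n) → ℝ := fun z => (1 + ‖z‖^2) ^ (-q/2) with hFq_def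
  have hFq_nonneg : ∀ z, 0 ≤ Fq z := fun z => rpow_nonneg (by positivity) _
  have hFint : Integrable Fq := by
    rw [hFq_def]
    exact integrable_rpow_neg_one_add_norm_sq (by rw [finrank_euclideanSpace_fin]; exact hq)
  set c0 : ℝ := ∫ z : EuclideanSpace ℝ (Fin n), Fq z with hc0_def
  set c1 : ℝ := ∫ z in ball (0:EuclideanSpace ℝ (Fin n)) 1, ‖z‖ ^ a with hc1_def
  set c2 : ℝ := ∫ z in (ball (0:EuclideanSpace ℝ (Fin n)) 1)ᶜ, ‖z‖ ^ b with hc2_def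
  have hc0 : 0 ≤ c0 := integral_nonneg hFq_nonneg
  have hc1 : 0 ≤ c1 :=
    setIntegral_nonneg measurableSet_ball (fun z _ => rpow_nonneg (norm_nonneg _) _)
  have hc2 : 0 ≤ c2 :=
    setIntegral_nonneg measurableSet_ball.compl (fun z _ => rpow_nonneg (norm_nonneg _) _)
  set K : ℝ := 2*(q^2+3*q) with hK_def
  have hK : 0 ≤ K := by rw [hK_def]; nlinarith
  set C : ℝ := K * c1 * 2^(q+2*s) + 2*c0*2^((n:ℝ)+2*s) + 2*c2*2^(2*s) + 1 with hC_def
  have hC1 : 0 ≤ K * c1 * 2^(q+2*s) :=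
    mul_nonneg (mul_nonneg hK hc1) (rpow_nonneg (by norm_num) _)
  have hC2 : 0 ≤ 2*c0*2^((n:ℝ)+2*s) :=
    mul_nonneg (by linarith) (rpow_nonneg (by norm_num) _)
  have hC3 : 0 ≤ 2*c2*2^(2*s) := mul_nonneg (by linarith) (rpow_nonneg (by norm_num) _)
  have hCpos : 0 < C := by rw [hC_def]; linarith
  refine ⟨C, hCpos, fun x => ?_⟩
  -- setup for fixed x
  set m : ℝ := Real.sqrt (1 + ‖x‖^2) with hm_def
  have hm1 : 1 ≤ m := by
    rw [hm_def]; exact Real.one_le_sqrt.2 (by nlinarith [sq_nonneg ‖x‖])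
  have hm0 : 0 < m := lt_of_lt_of_le one_pos hm1
  have hm2 : m^2 = 1 + ‖x‖^2 := by rw [hm_def]; exact Real.sq_sqrt (by positivity)
  set R : ℝ := m/2 with hR_def
  have hR0 : 0 < R := by rw [hR_def]; positivity
  obtain ⟨hIball, hVball⟩ := int_ball_R (n:=n) hn hR0 ha
  obtain ⟨hIcompl, hVcompl⟩ := int_compl_R (n:=n) hn hR0 hb
  set I : EuclideanSpace ℝ (Fin n) → ℝ := fun y =>
    ((1 + ‖x + y‖ ^ 2) ^ (-q / 2) - 2 * (1 + ‖x‖ ^ 2) ^ (-q / 2)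
        + (1 + ‖x - y‖ ^ 2) ^ (-q / 2)) / ‖y‖ ^ ((n : ℝ) + 2 * s) with hI_def
  -- majorants
  set G1 : EuclideanSpace ℝ (Fin n) → ℝ :=
    (ball (0:EuclideanSpace ℝ (Fin n)) R).indicator
      (fun y => (K * (R^2)^(-q/2-1)) * ‖y‖ ^ a) with hG1_def
  set G2 : EuclideanSpace ℝ (Fin n) → ℝ :=
    ((ball (0:EuclideanSpace ℝ (Fin n)) R)ᶜ).indicator
      (fun y => R^b * (Fq (x+y) + Fq (x-y))) with hG2_def
  set G3 : EuclideanSpace ℝ (Fin n) → ℝ :=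
    ((ball (0:EuclideanSpace ℝ (Fin n)) R)ᶜ).indicator
      (fun y => (2 * Fq x) * ‖y‖ ^ b) with hG3_def
  have hG1nn : ∀ y, 0 ≤ G1 y := fun y => indicator_nonneg
    (fun z _ => mul_nonneg (mul_nonneg hK (rpow_nonneg (by positivity) _))
      (rpow_nonneg (norm_nonneg _) _)) y
  have hG2nn : ∀ y, 0 ≤ G2 y := fun y => indicator_nonneg
    (fun z _ => mul_nonneg (rpow_nonneg hR0.le _)
      (add_nonneg (hFq_nonneg _) (hFq_nonneg _))) y
  have hG3nn : ∀ y, 0 ≤ G3 y := fun y => indicator_nonneg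
    (fun z _ => mul_nonneg (by linarith [hFq_nonneg x]) (rpow_nonneg (norm_nonneg _) _)) y
  have hG1int : Integrable G1 :=
    (integrable_indicator_iff measurableSet_ball).2 (hIball.const_mul _)
  have hG2int : Integrable G2 := by
    refine (integrable_indicator_iff measurableSet_ball.compl).2 ?_
    exact (((hFint.comp_add_left x).add (hFint.comp_sub_left x)).const_mul _).integrableOn
  have hG3int : Integrable G3 :=
    (integrable_indicator_iff measurableSet_ball.compl).2 (hIcompl.const_mul _)
  -- pointwise bound
  have hbound : ∀ y, |I y| ≤ G1 y + G2 y + G3 y := by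
    intro y
    by_cases hy : y ∈ ball (0:EuclideanSpace ℝ (Fin n)) R
    · have hG2z : G2 y = 0 := indicator_of_notMem (Set.notMem_compl_iff.2 hy) _
      have hG3z : G3 y = 0 := indicator_of_notMem (Set.notMem_compl_iff.2 hy) _
      rw [hG2z, hG3z, add_zero, add_zero]
      have hyR : ‖y‖ < R := mem_ball_zero_iff.1 hy
      have hG1v : G1 y = (K * (R^2)^(-q/2-1)) * ‖y‖ ^ a := indicator_of_mem hy _
      rw [hG1v]
      have hA : ∀ t : ℝ, |t| ≤ 1 → R^2 ≤ 1 + ‖x + t • y‖ ^ 2 := by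
        intro t ht
        have hnv : ‖t • y‖ ≤ R := by
          rw [norm_smul, Real.norm_eq_abs]
          calc |t| * ‖y‖ ≤ 1 * ‖y‖ :=
                mul_le_mul_of_nonneg_right ht (norm_nonneg _)
            _ = ‖y‖ := one_mul _
            _ ≤ R := hyR.le
        have hvm : ‖t • y‖ ≤ m := by rw [hR_def] at hnv; linarith
        have hbl := bracket_lower x (t • y) (by rw [← hm_def]; exact hvm)
        rw [← hm_def] at hbl
        have hmr : R ≤ m - ‖t • y‖ := by rw [hR_def] at hnv ⊢; linarith
        have h2 : R^2 ≤ (m - ‖t • y‖)^2 := pow_le_pow_left₀ hR0.le hmr 2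
        linarith
      have hD := secondDiff_bound (n:=n) hq0 x y (A := R^2) (by positivity) hA
      rw [hI_def]
      simp only []
      rw [abs_div, abs_of_nonneg (rpow_nonneg (norm_nonneg y) _)]
      rcases eq_or_ne y 0 with rfl | hy0
      · rw [norm_zero, Real.zero_rpow (ne_of_gt hns_pos), div_zero]
        exact mul_nonneg (mul_nonneg hK (rpow_nonneg (by positivity) _))
          (rpow_nonneg le_rfl _)
      · have hny : 0 < ‖y‖ := norm_pos_iff.2 hy0
        have hden : 0 < ‖y‖ ^ ((n:ℝ) + 2*s) := rpow_pos_of_pos hny _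
        rw [div_le_iff₀ hden]
        have hyy : ‖y‖ ^ a * ‖y‖ ^ ((n:ℝ)+2*s) = ‖y‖ ^ (2:ℕ) := by
          rw [← Real.rpow_add hny, ← Real.rpow_natCast ‖y‖ 2]
          congr 1
          rw [ha_def]; push_cast; ring
        calc |(1 + ‖x + y‖ ^ 2) ^ (-q / 2) - 2 * (1 + ‖x‖ ^ 2) ^ (-q / 2)
              + (1 + ‖x - y‖ ^ 2) ^ (-q / 2)|
            ≤ 2 * (q ^ 2 + 3 * q) * ‖y‖ ^ 2 * (R^2) ^ (-q / 2 - 1) := hD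
          _ = 2 * (q ^ 2 + 3 * q) * (‖y‖ ^ a * ‖y‖ ^ ((n:ℝ)+2*s)) * (R^2) ^ (-q / 2 - 1) := by
              rw [hyy]
          _ = K * (R^2)^(-q/2-1) * ‖y‖ ^ a * ‖y‖ ^ ((n:ℝ) + 2*s) := by
              rw [hK_def]; ring
    · have hG1z : G1 y = 0 := indicator_of_notMem hy _
      have hyc : y ∈ (ball (0:EuclideanSpace ℝ (Fin n)) R)ᶜ := hy
      have hG2v : G2 y = R^b * (Fq (x+y) + Fq (x-y)) := indicator_of_mem hyc _
      have hG3v : G3 y = (2 * Fq x) * ‖y‖ ^ b := indicator_of_mem hyc _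
      rw [hG1z, hG2v, hG3v, zero_add]
      have hyR : R ≤ ‖y‖ := not_lt.1 (fun hc => hy (mem_ball_zero_iff.2 hc))
      have hny : 0 < ‖y‖ := lt_of_lt_of_le hR0 hyR
      have hden : 0 < ‖y‖ ^ ((n:ℝ) + 2*s) := rpow_pos_of_pos hny _
      have hdenR : 0 < R ^ ((n:ℝ) + 2*s) := rpow_pos_of_pos hR0 _
      have hdd : R ^ ((n:ℝ) + 2*s) ≤ ‖y‖ ^ ((n:ℝ) + 2*s) :=
        Real.rpow_le_rpow hR0.le hyR (by linarith)
      have e1 : (1 + ‖x + y‖ ^ 2) ^ (-q / 2) = Fq (x+y) := rfl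
      have e2 : (1 + ‖x‖ ^ 2) ^ (-q / 2) = Fq x := rfl
      have e3 : (1 + ‖x - y‖ ^ 2) ^ (-q / 2) = Fq (x-y) := rfl
      rw [hI_def]
      simp only []
      rw [abs_div, abs_of_nonneg (rpow_nonneg (norm_nonneg y) _)]
      rw [e1, e2, e3]
      have hnum : |Fq (x+y) - 2 * Fq x + Fq (x-y)| ≤ Fq (x+y) + Fq (x-y) + 2 * Fq x := by
        have h1 : 0 ≤ Fq (x+y) := hFq_nonneg _
        have h2 : 0 ≤ Fq (x-y) := hFq_nonneg _
        have h3 : 0 ≤ Fq x := hFq_nonneg x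
        rw [abs_le]; constructor <;> linarith
      calc |Fq (x+y) - 2 * Fq x + Fq (x-y)| / ‖y‖ ^ ((n:ℝ) + 2*s)
          ≤ (Fq (x+y) + Fq (x-y) + 2 * Fq x) / ‖y‖ ^ ((n:ℝ) + 2*s) :=
            (div_le_div_iff_of_pos_right hden).2 hnum
        _ = (Fq (x+y) + Fq (x-y)) / ‖y‖ ^ ((n:ℝ) + 2*s)
            + (2 * Fq x) / ‖y‖ ^ ((n:ℝ) + 2*s) := by ring
        _ ≤ (Fq (x+y) + Fq (x-y)) / R ^ ((n:ℝ) + 2*s)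
            + (2 * Fq x) / ‖y‖ ^ ((n:ℝ) + 2*s) := by
            gcongr
        _ = R^b * (Fq (x+y) + Fq (x-y)) + (2 * Fq x) * ‖y‖ ^ b := by
            rw [hb_def, Real.rpow_neg hR0.le, Real.rpow_neg (norm_nonneg y)]
            rw [div_eq_mul_inv, div_eq_mul_inv]
            ring
  -- measurability and integrability
  have hImeas : AEStronglyMeasurable I volume := by
    rw [hI_def]
    have hcont : Continuous fun y : EuclideanSpace ℝ (Fin n) =>
        (1 + ‖x + y‖ ^ 2) ^ (-q / 2) - 2 * (1 + ‖x‖ ^ 2) ^ (-q / 2)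
          + (1 + ‖x - y‖ ^ 2) ^ (-q / 2) := by
      refine Continuous.add (Continuous.sub ?_ continuous_const) ?_
      · exact Continuous.rpow_const (by continuity) (fun y => Or.inl (by positivity))
      · exact Continuous.rpow_const (by continuity) (fun y => Or.inl (by positivity))
    exact (hcont.measurable.div (meas_rpow_norm (n:=n))).aestronglyMeasurable
  have hGint : Integrable (fun y => G1 y + G2 y + G3 y) :=
    (hG1int.add hG2int).add hG3int
  have hIint : Integrable I := by
    refine Integrable.mono' hGint hImeas (ae_of_all _ fun y => ?_)
    rw [Real.norm_eq_abs]
    exact hbound y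
  refine ⟨hIint, ?_⟩
  -- integral computations
  have hMnn : (0:ℝ) ≤ m ^ b := rpow_nonneg hm0.le _
  have hRb : R^b = 2^((n:ℝ)+2*s) * m ^ b := by
    rw [hb_def, hR_def, Real.div_rpow hm0.le (by norm_num : (0:ℝ) ≤ 2), div_eq_mul_inv,
      ← Real.rpow_neg (by norm_num : (0:ℝ) ≤ 2), neg_neg, mul_comm]
  have hint1 : (∫ y, G1 y) ≤ K * c1 * 2^(q+2*s) * m ^ b := by
    have hcalc : (∫ y, G1 y) = K * c1 * 2^(q+2*s) * m^(-(q+2*s)) := by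
      rw [hG1_def, integral_indicator measurableSet_ball, integral_const_mul, hVball, ← hc1_def]
      rw [← Real.rpow_natCast R 2, ← Real.rpow_mul hR0.le]
      rw [show (((2:ℕ):ℝ) * (-q/2-1)) = -q-2 by push_cast; ring]
      rw [show K * (R^(-q-2)) * (R^((n:ℝ)+a)*c1) = K * c1 * (R^(-q-2) * R^((n:ℝ)+a)) by ring]
      rw [← Real.rpow_add hR0]
      rw [show (-q-2+((n:ℝ)+a)) = -(q+2*s) by rw [ha_def]; ring]
      rw [hR_def, Real.div_rpow hm0.le (by norm_num : (0:ℝ) ≤ 2), div_eq_mul_inv,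
        ← Real.rpow_neg (by norm_num : (0:ℝ) ≤ 2), neg_neg]
      ring
    rw [hcalc]
    have hexp : m^(-(q+2*s)) ≤ m ^ b := by
      rw [hb_def]
      exact Real.rpow_le_rpow_of_exponent_le hm1 (by linarith)
    exact mul_le_mul_of_nonneg_left hexp hC1
  have hint2 : (∫ y, G2 y) ≤ 2*c0*2^((n:ℝ)+2*s) * m ^ b := by
    have h1 : (∫ y, G2 y)
        = R^b * ∫ y in (ball (0:EuclideanSpace ℝ (Fin n)) R)ᶜ, (Fq (x+y) + Fq (x-y)) := by
      rw [hG2_def, integral_indicator measurableSet_ball.compl, integral_const_mul]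
    have hintsum : Integrable (fun y => Fq (x+y) + Fq (x-y)) :=
      (hFint.comp_add_left x).add (hFint.comp_sub_left x)
    have h2 : (∫ y in (ball (0:EuclideanSpace ℝ (Fin n)) R)ᶜ, (Fq (x+y) + Fq (x-y))) ≤ 2*c0 := by
      calc (∫ y in (ball (0:EuclideanSpace ℝ (Fin n)) R)ᶜ, (Fq (x+y) + Fq (x-y)))
          ≤ ∫ y, (Fq (x+y) + Fq (x-y)) :=
            setIntegral_le_integral hintsum
              (ae_of_all _ fun y => add_nonneg (hFq_nonneg _) (hFq_nonneg _))
        _ = c0 + c0 := by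
            rw [integral_add (hFint.comp_add_left x) (hFint.comp_sub_left x),
              integral_add_left_eq_self Fq x, integral_sub_left_eq_self Fq volume x, hc0_def]
        _ = 2*c0 := by ring
    rw [h1, hRb]
    have hnn : (0:ℝ) ≤ 2^((n:ℝ)+2*s) * m ^ b :=
      mul_nonneg (rpow_nonneg (by norm_num) _) hMnn
    calc 2^((n:ℝ)+2*s) * m ^ b * ∫ y in (ball (0:EuclideanSpace ℝ (Fin n)) R)ᶜ,
          (Fq (x+y) + Fq (x-y))
        ≤ 2^((n:ℝ)+2*s) * m ^ b * (2*c0) := mul_le_mul_of_nonneg_left h2 hnn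
      _ = 2*c0*2^((n:ℝ)+2*s) * m ^ b := by ring
  have hint3 : (∫ y, G3 y) ≤ 2*c2*2^(2*s) * m ^ b := by
    have hFqx : Fq x = m^(-q) := by
      rw [hFq_def]
      show (1 + ‖x‖^2 : ℝ) ^ (-q/2) = m^(-q)
      rw [← hm2, ← Real.rpow_natCast m 2, ← Real.rpow_mul hm0.le]
      congr 1; push_cast; ring
    have hcalc : (∫ y, G3 y) = 2*c2*2^(2*s) * (m^(-q) * m^(-(2*s))) := by
      rw [hG3_def, integral_indicator measurableSet_ball.compl, integral_const_mul, hVcompl,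
        ← hc2_def, hFqx]
      rw [show ((n:ℝ)+b) = -(2*s) by rw [hb_def]; ring]
      rw [hR_def, Real.div_rpow hm0.le (by norm_num : (0:ℝ) ≤ 2), div_eq_mul_inv,
        ← Real.rpow_neg (by norm_num : (0:ℝ) ≤ 2), neg_neg]
      ring
    rw [hcalc, ← Real.rpow_add hm0]
    have hexp : m^(-q + -(2*s)) ≤ m ^ b := by
      rw [hb_def]
      exact Real.rpow_le_rpow_of_exponent_le hm1 (by linarith)
    exact mul_le_mul_of_nonneg_left hexp hC3
  have h12 : Integrable (fun y => G1 y + G2 y) := hG1int.add hG2int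
  have hsplit : (∫ y, (G1 y + G2 y + G3 y))
      = (∫ y, G1 y) + (∫ y, G2 y) + (∫ y, G3 y) := by
    exact (integral_add h12 hG3int).trans (by rw [integral_add hG1int hG2int])
  have hmb : m ^ b = (1 + ‖x‖ ^ 2) ^ (b/2) := by
    rw [← hm2, ← Real.rpow_natCast m 2, ← Real.rpow_mul hm0.le]
    congr 1; push_cast; ring
  calc |∫ y, I y| ≤ ∫ y, |I y| := by
        have := norm_integral_le_integral_norm (μ := volume) I
        simpa [Real.norm_eq_abs] using this
    _ ≤ ∫ y, (G1 y + G2 y + G3 y) :=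
        integral_mono hIint.abs hGint (fun y => hbound y)
    _ = (∫ y, G1 y) + (∫ y, G2 y) + (∫ y, G3 y) := hsplit
    _ ≤ C * m ^ b := by
        rw [hC_def]
        nlinarith [hint1, hint2, hint3, hMnn]
    _ = C * (1 + ‖x‖ ^ 2) ^ (-((n:ℝ) + 2*s) / 2) := by
        rw [hmb, hb_def]
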